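/- Define the σ-circulant of g = Σ_ν z^ν g_ν ∈ A[z;σ] as M^σ(g) := Σ_ν z^ν P_σ^ν M_{g_ν} ∈ F[z]^{n×n}. Then M^σ(g)·M^σ(h) = M^σ(g*h) for all g,h ∈ A[z;σ], and g ↦ M^σ(g) is an injective F-algebra homomorphism; moreover p(u·M^σ(g)) = p(u)*g for all u ∈ F[z]^n, where p is the polynomial identification F[z]^n ≅ A[z]. -/

import Mathlib

open Polynomial

/-- A = F[x]/(x^n − 1). -/
abbrev Amod (F : Type) [Field F] (n : ℕ) : Type :=
  Polynomial F ⧸ (Ideal.span {Polynomial.X ^ n - 1} : Ideal (Polynomial F))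

/-- the class of x in A. -/
noncomputable def xbar (F : Type) [Field F] (n : ℕ) : Amod F n :=
  Ideal.Quotient.mk _ Polynomial.X

/-- the element of A with coefficient vector w with respect to the basis 1,x,...,x^{n−1}. -/
noncomputable def rep (F : Type) [Field F] (n : ℕ) (w : Fin n → F) : Amod F n :=
  ∑ j : Fin n, algebraMap F (Amod F n) (w j) * xbar F n ^ (j : ℕ)

/-- The skew multiplication of A[z;σ]: a*z = z*σ(a). -/
noncomputable def skewMul {F A : Type*} [CommRing F] [CommRing A] [Algebra F A]
    (σ : A ≃ₐ[F] A) (g h : Polynomial A) : Polynomial A :=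
  ∑ ν ∈ g.support, ∑ μ ∈ h.support,
    Polynomial.monomial (ν + μ) ((σ ^ μ) (g.coeff ν) * h.coeff μ)

/-- The coefficientwise identification p : F[z]^n → A[z]. -/
noncomputable def pId (F : Type) [Field F] (n : ℕ) (v : Fin n → Polynomial F) :
    Polynomial (Amod F n) :=
  ∑ i : Fin n, Polynomial.C (xbar F n ^ (i : ℕ)) * (v i).map (algebraMap F (Amod F n))

/-- the σ-circulant M^σ(g) = Σ_ν z^ν P_σ^ν M_{g_ν}, built from the matrix P of σ and the
classical circulants Mc. -/
noncomputable def Msig (F : Type) [Field F] (n : ℕ)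
    (P : Matrix (Fin n) (Fin n) F) (Mc : Amod F n → Matrix (Fin n) (Fin n) F)
    (g : Polynomial (Amod F n)) : Matrix (Fin n) (Fin n) (Polynomial F) :=
  fun i j => ∑ ν ∈ g.support, Polynomial.monomial ν ((P ^ ν * Mc (g.coeff ν)) i j)

namespace Stmt18Aux

variable {F : Type} [Field F] {n : ℕ}

lemma algebraMap_Amod (c : F) :
    algebraMap F (Amod F n) c = Ideal.Quotient.mk _ (C c) := rfl

lemma rep_mk (w : Fin n → F) :
    rep F n w = Ideal.Quotient.mk _ (∑ j : Fin n, C (w j) * X ^ (j : ℕ)) := by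
  rw [rep, map_sum]
  refine Finset.sum_congr rfl fun j _ => ?_
  rw [map_mul, map_pow, algebraMap_Amod, xbar]

lemma poly_sum_degree_lt (hn : 0 < n) (a : Fin n → F) :
    (∑ j : Fin n, C (a j) * X ^ (j : ℕ)).degree < (n : WithBot ℕ) := by
  refine lt_of_le_of_lt (Polynomial.degree_sum_le _ _) ?_
  rw [Finset.sup_lt_iff]
  · intro j _
    exact lt_of_le_of_lt (Polynomial.degree_C_mul_X_pow_le _ _)
      (by exact_mod_cast j.isLt)
  · exact_mod_cast (WithBot.bot_lt_coe n)

lemma poly_sum_coeff (a : Fin n → F) (j : Fin n) :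
    (∑ j' : Fin n, C (a j') * X ^ (j' : ℕ)).coeff (j : ℕ) = a j := by
  rw [Polynomial.finset_sum_coeff]
  simp only [Polynomial.coeff_C_mul, Polynomial.coeff_X_pow]
  rw [Finset.sum_eq_single j]
  · simp
  · intro j' _ hne
    rw [if_neg (fun hc => hne (Fin.val_injective hc.symm)), mul_zero]
  · intro h; exact absurd (Finset.mem_univ j) h

lemma rep_injective (hn : 0 < n) : Function.Injective (rep F n) := by
  intro w w' hww
  have h0 : Ideal.Quotient.mk (Ideal.span {X ^ n - 1} : Ideal (Polynomial F))
      ((∑ j : Fin n, C (w j) * X ^ (j : ℕ)) - ∑ j : Fin n, C (w' j) * X ^ (j : ℕ)) = 0 := by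
    rw [map_sub, ← rep_mk, ← rep_mk, hww, sub_self]
  rw [Ideal.Quotient.eq_zero_iff_mem, Ideal.mem_span_singleton] at h0
  have hdeg : ((∑ j : Fin n, C (w j) * X ^ (j : ℕ)) -
      ∑ j : Fin n, C (w' j) * X ^ (j : ℕ)).degree < (X ^ n - 1 : Polynomial F).degree := by
    have hd : (X ^ n - 1 : Polynomial F).degree = (n : WithBot ℕ) := by
      simpa using Polynomial.degree_X_pow_sub_C hn (1 : F)
    rw [hd]
    exact lt_of_le_of_lt (Polynomial.degree_sub_le _ _)
      (max_lt (poly_sum_degree_lt hn w) (poly_sum_degree_lt hn w'))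
  have hz := Polynomial.eq_zero_of_dvd_of_degree_lt h0 hdeg
  have heq := sub_eq_zero.mp hz
  funext j
  rw [← poly_sum_coeff w j, ← poly_sum_coeff w' j, heq]

lemma rep_zero : rep F n 0 = 0 := by simp [rep]

lemma rep_sum {β : Type*} (s : Finset β) (v : β → Fin n → F) :
    rep F n (∑ t ∈ s, v t) = ∑ t ∈ s, rep F n (v t) := by
  simp only [rep, Finset.sum_apply, map_sum, Finset.sum_mul]
  exact Finset.sum_comm

lemma rep_add (w w' : Fin n → F) : rep F n (w + w') = rep F n w + rep F n w' := by
  simp only [rep, Pi.add_apply, map_add, add_mul, Finset.sum_add_distrib]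

lemma rep_smul (c : F) (w : Fin n → F) :
    rep F n (c • w) = algebraMap F (Amod F n) c * rep F n w := by
  simp only [rep, Pi.smul_apply, smul_eq_mul, map_mul, Finset.mul_sum, mul_assoc]

lemma vecMul_apply (w : Fin n → F) (M : Matrix (Fin n) (Fin n) F) (j : Fin n) :
    Matrix.vecMul w M j = ∑ i : Fin n, w i * M i j := rfl

lemma rep_vecMul (w : Fin n → F) (M : Matrix (Fin n) (Fin n) F) :
    rep F n (Matrix.vecMul w M) =
      ∑ i : Fin n, algebraMap F (Amod F n) (w i) * rep F n (M i) := by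
  simp only [rep, vecMul_apply, map_sum, Finset.sum_mul, Finset.mul_sum, map_mul]
  rw [Finset.sum_comm]
  exact Finset.sum_congr rfl fun i _ => Finset.sum_congr rfl fun j _ => (mul_assoc _ _ _)

lemma mul_row (M N : Matrix (Fin n) (Fin n) F) (i : Fin n) :
    (M * N) i = Matrix.vecMul (M i) N := by
  funext j
  rw [Matrix.mul_apply, vecMul_apply]

lemma rep_one_row (i : Fin n) :
    rep F n ((1 : Matrix (Fin n) (Fin n) F) i) = xbar F n ^ (i : ℕ) := by
  have key : ∀ j : Fin n,
      algebraMap F (Amod F n) ((1 : Matrix (Fin n) (Fin n) F) i j) * xbar F n ^ (j : ℕ)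
        = if i = j then xbar F n ^ (i : ℕ) else 0 := by
    intro j
    by_cases hij : i = j
    · subst hij; simp [Matrix.one_apply]
    · rw [Matrix.one_apply, if_neg hij, map_zero, zero_mul, if_neg hij]
  rw [rep, Finset.sum_congr rfl fun j _ => key j, Finset.sum_ite_eq Finset.univ i
    (fun _ => xbar F n ^ (i : ℕ)), if_pos (Finset.mem_univ i)]

section withData

variable {σ : Amod F n ≃ₐ[F] Amod F n} {P : Matrix (Fin n) (Fin n) F}
  {Mc : Amod F n → Matrix (Fin n) (Fin n) F}
  (hn : 0 < n)
  (hP : ∀ i : Fin n, rep F n (P i) = σ (xbar F n ^ (i : ℕ)))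
  (hMc : ∀ (a : Amod F n) (i : Fin n), rep F n (Mc a i) = xbar F n ^ (i : ℕ) * a)

include hMc in
lemma rep_vecMul_Mc (w : Fin n → F) (a : Amod F n) :
    rep F n (Matrix.vecMul w (Mc a)) = rep F n w * a := by
  rw [rep_vecMul, rep, Finset.sum_mul]
  exact Finset.sum_congr rfl fun i _ => by rw [hMc, mul_assoc]

include hP in
lemma rep_vecMul_P (w : Fin n → F) :
    rep F n (Matrix.vecMul w P) = σ (rep F n w) := by
  rw [rep_vecMul, rep, map_sum]
  exact Finset.sum_congr rfl fun i _ => by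
    rw [hP, map_mul, AlgEquiv.commutes]

lemma matrix_ext (hn : 0 < n) {M N : Matrix (Fin n) (Fin n) F}
    (h : ∀ i, rep F n (M i) = rep F n (N i)) : M = N :=
  Matrix.ext fun i j => congrFun (rep_injective hn (h i)) j

include hP in
lemma rep_Ppow_row (d : ℕ) (i : Fin n) :
    rep F n ((P ^ d) i) = (σ ^ d) (xbar F n ^ (i : ℕ)) := by
  induction d with
  | zero => rw [pow_zero, pow_zero, AlgEquiv.one_apply, rep_one_row]
  | succ d ih =>
      have h1 : (P ^ (d + 1)) i = Matrix.vecMul ((P ^ d) i) P := by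
        rw [pow_succ, mul_row]
      rw [h1, rep_vecMul_P hP, ih, pow_succ', AlgEquiv.mul_apply]

include hP in
lemma rep_vecMul_Ppow (d : ℕ) (w : Fin n → F) :
    rep F n (Matrix.vecMul w (P ^ d)) = (σ ^ d) (rep F n w) := by
  rw [rep_vecMul, rep, map_sum]
  refine Finset.sum_congr rfl fun i _ => ?_
  rw [rep_Ppow_row hP, map_mul]
  congr 1
  exact (AlgEquiv.commutes _ _).symm

include hn hMc in
lemma Mc_zero : Mc 0 = 0 := by
  refine matrix_ext hn fun i => ?_
  rw [hMc, mul_zero]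
  show (0 : Amod F n) = rep F n ((0 : Matrix (Fin n) (Fin n) F) i)
  rw [show (0 : Matrix (Fin n) (Fin n) F) i = 0 from rfl, rep_zero]

include hn hMc in
lemma Mc_add (a b : Amod F n) : Mc (a + b) = Mc a + Mc b := by
  refine matrix_ext hn fun i => ?_
  have : (Mc a + Mc b) i = Mc a i + Mc b i := rfl
  rw [hMc, this, rep_add, hMc, hMc, mul_add]

include hn hMc in
lemma Mc_smul (c : F) (a : Amod F n) : Mc (algebraMap F (Amod F n) c * a) = c • Mc a := by
  refine matrix_ext hn fun i => ?_
  have : (c • Mc a) i = c • (Mc a i) := rfl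
  rw [hMc, this, rep_smul, hMc]
  ring

include hn hMc in
lemma Mc_mul (a b : Amod F n) : Mc (a * b) = Mc a * Mc b := by
  refine matrix_ext hn fun i => ?_
  rw [hMc, mul_row, rep_vecMul_Mc hMc, hMc, mul_assoc]

include hn hMc in
lemma Mc_one : Mc 1 = 1 := by
  refine matrix_ext hn fun i => ?_
  rw [hMc, mul_one, rep_one_row]

include hn hP hMc in
lemma Mc_Ppow_comm (d : ℕ) (a : Amod F n) :
    Mc a * P ^ d = P ^ d * Mc ((σ ^ d) a) := by
  refine matrix_ext hn fun i => ?_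
  rw [mul_row, mul_row, rep_vecMul_Ppow hP, rep_vecMul_Mc hMc, hMc,
    rep_Ppow_row hP, map_mul]

include hn hMc in
lemma Mc_finsum {β : Type*} (s : Finset β) (f : β → Amod F n) :
    Mc (∑ t ∈ s, f t) = ∑ t ∈ s, Mc (f t) := by
  classical
  induction s using Finset.induction_on with
  | empty => simpa using Mc_zero hn hMc
  | insert _ _ hx ih =>
      rw [Finset.sum_insert hx, Finset.sum_insert hx, Mc_add hn hMc, ih]

include hn hMc in
lemma Msig_coeff (g : Polynomial (Amod F n)) (d : ℕ) (i j : Fin n) :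
    (Msig F n P Mc g i j).coeff d = (P ^ d * Mc (g.coeff d)) i j := by
  rw [Msig, Polynomial.finset_sum_coeff]
  simp only [Polynomial.coeff_monomial]
  rw [Finset.sum_ite_eq' g.support d (fun ν => (P ^ ν * Mc (g.coeff ν)) i j)]
  by_cases hd : d ∈ g.support
  · rw [if_pos hd]
  · rw [if_neg hd, Polynomial.notMem_support_iff.mp hd, Mc_zero hn hMc,
      mul_zero]
    rfl

lemma skewMul_coeff (σ : Amod F n ≃ₐ[F] Amod F n) (g h : Polynomial (Amod F n)) (d : ℕ) :
    (skewMul σ g h).coeff d =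
      ∑ p ∈ Finset.HasAntidiagonal.antidiagonal d, (σ ^ p.2) (g.coeff p.1) * h.coeff p.2 := by
  classical
  rw [skewMul]
  simp only [Polynomial.finset_sum_coeff, Polynomial.coeff_monomial]
  rw [← Finset.sum_product']
  set f : ℕ × ℕ → Amod F n :=
    fun p => if p.1 + p.2 = d then (σ ^ p.2) (g.coeff p.1) * h.coeff p.2 else 0 with hf
  have hL : ∑ p ∈ g.support ×ˢ h.support, f p =
      ∑ p ∈ g.support ×ˢ h.support ∪ Finset.HasAntidiagonal.antidiagonal d, f p := by
    refine Finset.sum_subset Finset.subset_union_left fun p _ hp => ?_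
    rw [Finset.mem_product] at hp
    rw [not_and_or] at hp
    rcases hp with hp | hp
    · simp only [hf, Polynomial.notMem_support_iff.mp hp, map_zero, zero_mul, ite_self]
    · simp only [hf, Polynomial.notMem_support_iff.mp hp, mul_zero, ite_self]
  have hR : ∑ p ∈ Finset.HasAntidiagonal.antidiagonal d, f p =
      ∑ p ∈ g.support ×ˢ h.support ∪ Finset.HasAntidiagonal.antidiagonal d, f p := by
    refine Finset.sum_subset Finset.subset_union_right fun p _ hp => ?_
    have hc : ¬ p.1 + p.2 = d := fun hc => hp (Finset.HasAntidiagonal.mem_antidiagonal.mpr hc)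
    simp only [hf, hc, if_false]
  have hstep : ∑ p ∈ g.support ×ˢ h.support,
      (if p.1 + p.2 = d then (σ ^ p.2) (g.coeff p.1) * h.coeff p.2 else 0) =
      ∑ p ∈ Finset.HasAntidiagonal.antidiagonal d, f p := by
    rw [hR, ← hL]
  rw [hstep]
  refine Finset.sum_congr rfl fun p hp => ?_
  simp [hf, Finset.HasAntidiagonal.mem_antidiagonal.mp hp]

lemma pId_coeff (v : Fin n → Polynomial F) (d : ℕ) :
    (pId F n v).coeff d = rep F n (fun i => (v i).coeff d) := by
  rw [pId, Polynomial.finset_sum_coeff, rep]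
  refine Finset.sum_congr rfl fun i _ => ?_
  rw [Polynomial.coeff_C_mul, Polynomial.coeff_map, mul_comm]

end withData

end Stmt18Aux

theorem stmt_18 (F : Type) [Field F] (n : ℕ) (hn : 0 < n)
    (hchar : ¬ (ringChar F ∣ n))
    (σ : Amod F n ≃ₐ[F] Amod F n)
    (P : Matrix (Fin n) (Fin n) F)
    (hP : ∀ i : Fin n, rep F n (P i) = σ (xbar F n ^ (i : ℕ)))
    (Mc : Amod F n → Matrix (Fin n) (Fin n) F)
    (hMc : ∀ (a : Amod F n) (i : Fin n), rep F n (Mc a i) = xbar F n ^ (i : ℕ) * a) :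
    (∀ g h : Polynomial (Amod F n),
        Msig F n P Mc (skewMul σ g h) = Msig F n P Mc g * Msig F n P Mc h) ∧
    (∀ g h : Polynomial (Amod F n),
        Msig F n P Mc (g + h) = Msig F n P Mc g + Msig F n P Mc h) ∧
    (∀ (c : F) (g : Polynomial (Amod F n)),
        Msig F n P Mc (c • g) = c • Msig F n P Mc g) ∧
    (Msig F n P Mc 1 = 1) ∧
    Function.Injective (Msig F n P Mc) ∧
    (∀ (u : Fin n → Polynomial F) (g : Polynomial (Amod F n)),
        pId F n (Matrix.vecMul u (Msig F n P Mc g)) = skewMul σ (pId F n u) g) := by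
  classical
  have key : ∀ (ν μ : ℕ) (a b : Amod F n),
      (P ^ ν * Mc a) * (P ^ μ * Mc b) = P ^ (ν + μ) * Mc ((σ ^ μ) a * b) := by
    intro ν μ a b
    rw [pow_add, Stmt18Aux.Mc_mul hn hMc]
    calc P ^ ν * Mc a * (P ^ μ * Mc b)
        = P ^ ν * (Mc a * P ^ μ) * Mc b := by simp only [mul_assoc]
      _ = P ^ ν * (P ^ μ * Mc ((σ ^ μ) a)) * Mc b := by
          rw [Stmt18Aux.Mc_Ppow_comm hn hP hMc]
      _ = P ^ ν * P ^ μ * (Mc ((σ ^ μ) a) * Mc b) := by simp only [mul_assoc]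
  refine ⟨?_, ?_, ?_, ?_, ?_, ?_⟩
  · -- multiplicativity
    intro g h
    refine Matrix.ext fun i j => Polynomial.ext fun d => ?_
    have lhs_eq : (P ^ d * Mc ((skewMul σ g h).coeff d)) i j
        = ∑ p ∈ Finset.HasAntidiagonal.antidiagonal d,
            (P ^ p.1 * Mc (g.coeff p.1) * (P ^ p.2 * Mc (h.coeff p.2))) i j := by
      rw [Stmt18Aux.skewMul_coeff, Stmt18Aux.Mc_finsum hn hMc, Matrix.mul_sum,
        Matrix.sum_apply]
      refine Finset.sum_congr rfl fun p hp => ?_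
      rw [key p.1 p.2, Finset.HasAntidiagonal.mem_antidiagonal.mp hp]
    have rhs_eq : ((Msig F n P Mc g * Msig F n P Mc h) i j).coeff d
        = ∑ p ∈ Finset.HasAntidiagonal.antidiagonal d,
            (P ^ p.1 * Mc (g.coeff p.1) * (P ^ p.2 * Mc (h.coeff p.2))) i j := by
      rw [Matrix.mul_apply, Polynomial.finset_sum_coeff]
      simp only [Polynomial.coeff_mul, Stmt18Aux.Msig_coeff hn hMc]
      rw [Finset.sum_comm]
      refine Finset.sum_congr rfl fun p _ => ?_
      rw [Matrix.mul_apply]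
    rw [Stmt18Aux.Msig_coeff hn hMc, lhs_eq, rhs_eq]
  · -- additivity
    intro g h
    refine Matrix.ext fun i j => Polynomial.ext fun d => ?_
    simp only [Matrix.add_apply, Polynomial.coeff_add, Stmt18Aux.Msig_coeff hn hMc]
    rw [Stmt18Aux.Mc_add hn hMc, mul_add, Matrix.add_apply]
  · -- scalar multiplication
    intro c g
    refine Matrix.ext fun i j => Polynomial.ext fun d => ?_
    simp only [Matrix.smul_apply, Polynomial.coeff_smul, Stmt18Aux.Msig_coeff hn hMc]
    rw [Algebra.smul_def, Stmt18Aux.Mc_smul hn hMc, Matrix.mul_smul, Matrix.smul_apply]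
  · -- unit
    refine Matrix.ext fun i j => Polynomial.ext fun d => ?_
    rw [Stmt18Aux.Msig_coeff hn hMc, Matrix.one_apply]
    by_cases hd : d = 0 <;> by_cases hij : i = j <;>
      simp [hd, hij, Polynomial.coeff_one, Stmt18Aux.Mc_one hn hMc,
        Stmt18Aux.Mc_zero hn hMc, Matrix.one_apply]
  · -- injectivity
    intro g h hgh
    have hrow : ∀ d : ℕ, (P ^ d * Mc (g.coeff d)) = (P ^ d * Mc (h.coeff d)) := by
      intro d
      refine Matrix.ext fun i j => ?_
      have hcc := congrArg (fun M : Matrix (Fin n) (Fin n) (Polynomial F) =>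
        (M i j).coeff d) hgh
      simpa only [Stmt18Aux.Msig_coeff hn hMc] using hcc
    have key0 : ∀ (d : ℕ) (a : Amod F n),
        rep F n ((P ^ d * Mc a) (⟨0, hn⟩ : Fin n)) = a := by
      intro d a
      rw [Stmt18Aux.mul_row, Stmt18Aux.rep_vecMul_Mc hMc, Stmt18Aux.rep_Ppow_row hP]
      simp
    refine Polynomial.ext fun d => ?_
    have h2 := congrArg (fun M : Matrix (Fin n) (Fin n) F =>
      rep F n (M (⟨0, hn⟩ : Fin n))) (hrow d)
    simpa only [key0] using h2
  · -- p(u ⬝ M^σ(g)) = p(u) * g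
    intro u g
    refine Polynomial.ext fun d => ?_
    rw [Stmt18Aux.pId_coeff, Stmt18Aux.skewMul_coeff]
    have hv : (fun i => ((Matrix.vecMul u (Msig F n P Mc g)) i).coeff d)
        = ∑ p ∈ Finset.HasAntidiagonal.antidiagonal d,
            Matrix.vecMul (fun k => (u k).coeff p.1) (P ^ p.2 * Mc (g.coeff p.2)) := by
      funext i
      rw [Finset.sum_apply]
      have h1 : (Matrix.vecMul u (Msig F n P Mc g)) i
          = ∑ k : Fin n, u k * Msig F n P Mc g k i := rfl
      rw [h1, Polynomial.finset_sum_coeff]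
      simp only [Polynomial.coeff_mul, Stmt18Aux.Msig_coeff hn hMc]
      rw [Finset.sum_comm]
      refine Finset.sum_congr rfl fun p _ => rfl
    rw [hv, Stmt18Aux.rep_sum]
    refine Finset.sum_congr rfl fun p _ => ?_
    rw [← Matrix.vecMul_vecMul, Stmt18Aux.rep_vecMul_Mc hMc,
      Stmt18Aux.rep_vecMul_Ppow hP, ← Stmt18Aux.pId_coeff]
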